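/- (Key lemma of Arthur–Vassilvitskii D² sampling, restricted to one cluster.) Let A ⊆ ℝ^d be a nonempty finite set with mean μ = (1/|A|)∑_{x∈A} x, and let S ⊆ ℝ^d be a nonempty finite set of centers with φ_A(S) > 0. Then ∑_{x∈A} (φ_{{x}}(S)/φ_A(S)) · φ_A(S ∪ {x}) ≤ 8·φ_A({μ}); i.e., if a point x is sampled from A with probability proportional to φ_{{x}}(S), the expected cost of A after adding x as a center is at most 8·φ_A({μ}). -/

import Mathlib

open Finset

open scoped Classical

/-- `phiPt x S` is the squared distance from `x` to its nearest center in `S`,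
i.e. `min_{s ∈ S} ‖x - s‖²`. -/
noncomputable def phiPt {d : ℕ} (x : EuclideanSpace ℝ (Fin d))
    (S : Finset (EuclideanSpace ℝ (Fin d))) : ℝ :=
  sInf ((fun s => ‖x - s‖ ^ 2) '' (S : Set (EuclideanSpace ℝ (Fin d))))

/-- `phi A S = ∑_{x ∈ A} min_{s ∈ S} ‖x - s‖²`, the `k`-means cost of centers `S` on `A`. -/
noncomputable def phi {d : ℕ} (A S : Finset (EuclideanSpace ℝ (Fin d))) : ℝ :=
  ∑ x ∈ A, phiPt x S

/-- The mean (centroid) of a finite set of points. -/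
noncomputable def mean {d : ℕ} (A : Finset (EuclideanSpace ℝ (Fin d))) :
    EuclideanSpace ℝ (Fin d) :=
  (A.card : ℝ)⁻¹ • ∑ x ∈ A, x

/-- `rho X S z` is the cost of the centers `S` on `X` after discarding the `z`
points of `X` farthest from `S`: the minimum of `phi Y S` over `Y ⊆ X` with
`|Y| = |X| - z`. -/
noncomputable def rho {d : ℕ} (X S : Finset (EuclideanSpace ℝ (Fin d))) (z : ℕ) : ℝ :=
  sInf ((fun Y : Finset (EuclideanSpace ℝ (Fin d)) => phi Y S) ''
    {Y : Finset (EuclideanSpace ℝ (Fin d)) | Y ⊆ X ∧ Y.card = X.card - z})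

section aux
variable {d : ℕ}

lemma phiPt_nonneg (x : EuclideanSpace ℝ (Fin d)) (S : Finset (EuclideanSpace ℝ (Fin d))) :
    0 ≤ phiPt x S := by
  apply Real.sInf_nonneg
  rintro y ⟨s, _, rfl⟩; positivity

lemma phiPt_le (x : EuclideanSpace ℝ (Fin d)) {S : Finset (EuclideanSpace ℝ (Fin d))}
    {s : EuclideanSpace ℝ (Fin d)} (hs : s ∈ S) : phiPt x S ≤ ‖x - s‖ ^ 2 := by
  apply csInf_le
  · exact ⟨0, by rintro y ⟨t, _, rfl⟩; positivity⟩
  · exact ⟨s, hs, rfl⟩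

lemma phiPt_exists (x : EuclideanSpace ℝ (Fin d)) {S : Finset (EuclideanSpace ℝ (Fin d))}
    (hS : S.Nonempty) : ∃ s ∈ S, phiPt x S = ‖x - s‖ ^ 2 := by
  obtain ⟨t, ht⟩ := hS
  have hne : ((fun s => ‖x - s‖ ^ 2) '' (S : Set (EuclideanSpace ℝ (Fin d)))).Nonempty :=
    ⟨_, ⟨t, ht, rfl⟩⟩
  have hfin : ((fun s => ‖x - s‖ ^ 2) '' (S : Set (EuclideanSpace ℝ (Fin d)))).Finite :=
    S.finite_toSet.image _
  obtain ⟨s, hs, h⟩ := hne.csInf_mem hfin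
  exact ⟨s, hs, h.symm⟩

lemma phiPt_singleton (x μ : EuclideanSpace ℝ (Fin d)) : phiPt x {μ} = ‖x - μ‖ ^ 2 := by
  simp [phiPt]

lemma phiPt_tri (x a : EuclideanSpace ℝ (Fin d)) {S : Finset (EuclideanSpace ℝ (Fin d))}
    (hS : S.Nonempty) : phiPt x S ≤ 2 * phiPt a S + 2 * ‖a - x‖ ^ 2 := by
  obtain ⟨s, hs, h⟩ := phiPt_exists a hS
  have h1 := phiPt_le x hs
  have h2 : ‖x - s‖ ≤ ‖a - x‖ + ‖a - s‖ := by
    have := dist_triangle x a s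
    simp only [dist_eq_norm] at this
    rwa [norm_sub_rev x a] at this
  nlinarith [norm_nonneg (x - s), norm_nonneg (a - x), norm_nonneg (a - s), sq_nonneg (‖a - x‖ - ‖a - s‖), sq_nonneg (‖a - x‖ + ‖a - s‖)]

lemma pair_sum_le (A : Finset (EuclideanSpace ℝ (Fin d))) (μ : EuclideanSpace ℝ (Fin d)) :
    ∑ x ∈ A, ∑ a ∈ A, ‖a - x‖ ^ 2 ≤ 2 * A.card * ∑ a ∈ A, ‖a - μ‖ ^ 2 := by
  have key : ∀ a x : EuclideanSpace ℝ (Fin d), ‖a - x‖ ^ 2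
      = ‖a - μ‖ ^ 2 + ‖x - μ‖ ^ 2 - 2 * (inner ℝ (a - μ) (x - μ) : ℝ) := by
    intro a x
    have hax : a - x = (a - μ) - (x - μ) := by abel
    rw [hax, norm_sub_sq_real]; ring
  have hin : ∀ x : EuclideanSpace ℝ (Fin d),
      ∑ a ∈ A, (inner ℝ (a - μ) (x - μ) : ℝ) = (inner ℝ (∑ a ∈ A, (a - μ)) (x - μ) : ℝ) :=
    fun x => (sum_inner A (fun a => a - μ) (x - μ)).symm
  have hin2 : ∑ x ∈ A, (inner ℝ (∑ a ∈ A, (a - μ)) (x - μ) : ℝ)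
      = (inner ℝ (∑ a ∈ A, (a - μ)) (∑ x ∈ A, (x - μ)) : ℝ) :=
    (inner_sum A (fun x => x - μ) _).symm
  have hself : (0:ℝ) ≤ (inner ℝ (∑ a ∈ A, (a - μ)) (∑ a ∈ A, (a - μ)) : ℝ) := real_inner_self_nonneg
  calc ∑ x ∈ A, ∑ a ∈ A, ‖a - x‖ ^ 2
      = ∑ x ∈ A, ((∑ a ∈ A, ‖a - μ‖ ^ 2) + A.card * ‖x - μ‖ ^ 2
          - 2 * (inner ℝ (∑ a ∈ A, (a - μ)) (x - μ) : ℝ)) := by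
        refine Finset.sum_congr rfl fun x _ => ?_
        rw [Finset.sum_congr rfl (fun a _ => key a x)]
        rw [Finset.sum_sub_distrib, Finset.sum_add_distrib, Finset.sum_const, nsmul_eq_mul,
          ← Finset.mul_sum, hin x]
    _ = (A.card : ℝ) * (∑ a ∈ A, ‖a - μ‖ ^ 2) + (A.card : ℝ) * (∑ x ∈ A, ‖x - μ‖ ^ 2)
          - 2 * (inner ℝ (∑ a ∈ A, (a - μ)) (∑ x ∈ A, (x - μ)) : ℝ) := by
        rw [Finset.sum_sub_distrib, Finset.sum_add_distrib, ← Finset.mul_sum, Finset.sum_const,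
          nsmul_eq_mul, ← Finset.mul_sum, hin2]
    _ ≤ 2 * A.card * ∑ a ∈ A, ‖a - μ‖ ^ 2 := by nlinarith

end aux

/-- key lemma of Arthur–Vassilvitskii `D²` sampling, restricted to one
cluster. If a point `x` is sampled from `A` with probability proportional to
`φ_{{x}}(S)`, the expected cost of `A` after adding `x` as a center is at most
`8·φ_A({μ})`. -/
theorem stmt11 {d : ℕ} (A S : Finset (EuclideanSpace ℝ (Fin d)))
    (hA : A.Nonempty) (hS : S.Nonempty) (hpos : 0 < phi A S) :
    ∑ x ∈ A, (phiPt x S / phi A S) * phi A (insert x S) ≤ 8 * phi A {mean A} := by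
  set μ := mean A with hμ
  set W := phi A S with hW
  have hn : (0:ℝ) < A.card := by
    exact_mod_cast Finset.card_pos.mpr hA
  -- key per-x bound
  have key : ∀ x ∈ A, (A.card : ℝ) * (phiPt x S * phi A (insert x S))
      ≤ 4 * W * ∑ a ∈ A, ‖a - x‖ ^ 2 := by
    intro x hx
    have hnDx : (A.card : ℝ) * phiPt x S
        ≤ ∑ a ∈ A, (2 * phiPt a S + 2 * ‖a - x‖ ^ 2) := by
      calc (A.card : ℝ) * phiPt x S = ∑ _a ∈ A, phiPt x S := by
            rw [Finset.sum_const, nsmul_eq_mul]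
        _ ≤ _ := Finset.sum_le_sum fun a _ => phiPt_tri x a hS
    have hins : 0 ≤ phi A (insert x S) :=
      Finset.sum_nonneg fun a _ => phiPt_nonneg a _
    have step1 : (A.card : ℝ) * (phiPt x S * phi A (insert x S))
        ≤ (∑ a ∈ A, (2 * phiPt a S + 2 * ‖a - x‖ ^ 2)) * phi A (insert x S) := by
      rw [← mul_assoc]
      exact mul_le_mul_of_nonneg_right hnDx hins
    have step2 : (∑ a ∈ A, (2 * phiPt a S + 2 * ‖a - x‖ ^ 2)) * phi A (insert x S)
        ≤ 4 * W * ∑ a ∈ A, ‖a - x‖ ^ 2 := by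
      have expand : (∑ a ∈ A, (2 * phiPt a S + 2 * ‖a - x‖ ^ 2)) * phi A (insert x S)
          = ∑ a ∈ A, ∑ b ∈ A, (2 * phiPt a S + 2 * ‖a - x‖ ^ 2) * phiPt b (insert x S) := by
        rw [phi, Finset.sum_mul_sum]
      have hterm : ∀ a ∈ A, ∀ b ∈ A,
          (2 * phiPt a S + 2 * ‖a - x‖ ^ 2) * phiPt b (insert x S)
          ≤ 2 * phiPt a S * ‖b - x‖ ^ 2 + 2 * ‖a - x‖ ^ 2 * phiPt b S := by
        intro a _ b _
        have h1 : phiPt b (insert x S) ≤ ‖b - x‖ ^ 2 :=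
          phiPt_le b (Finset.mem_insert_self x S)
        have h2 : ∀ s ∈ S, phiPt b (insert x S) ≤ ‖b - s‖ ^ 2 := fun s hs =>
          phiPt_le b (Finset.mem_insert_of_mem hs)
        have h3 : phiPt b (insert x S) ≤ phiPt b S := by
          obtain ⟨s, hs, h⟩ := phiPt_exists b hS
          rw [h]; exact h2 s hs
        have hDa := phiPt_nonneg a S
        have hax : (0:ℝ) ≤ ‖a - x‖ ^ 2 := by positivity
        nlinarith [phiPt_nonneg b (insert x S)]
      calc (∑ a ∈ A, (2 * phiPt a S + 2 * ‖a - x‖ ^ 2)) * phi A (insert x S)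
          = ∑ a ∈ A, ∑ b ∈ A, (2 * phiPt a S + 2 * ‖a - x‖ ^ 2) * phiPt b (insert x S) :=
            expand
        _ ≤ ∑ a ∈ A, ∑ b ∈ A, (2 * phiPt a S * ‖b - x‖ ^ 2 + 2 * ‖a - x‖ ^ 2 * phiPt b S) :=
            Finset.sum_le_sum fun a ha => Finset.sum_le_sum fun b hb => hterm a ha b hb
        _ = 4 * W * ∑ a ∈ A, ‖a - x‖ ^ 2 := by
            simp only [Finset.sum_add_distrib]
            rw [← Finset.sum_mul_sum, ← Finset.sum_mul_sum, ← Finset.mul_sum, ← Finset.mul_sum]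
            have hWsum : W = ∑ a ∈ A, phiPt a S := hW
            rw [hWsum]; ring
    linarith
  -- sum the per-x bounds
  have sumkey : (A.card : ℝ) * ∑ x ∈ A, phiPt x S * phi A (insert x S)
      ≤ 4 * W * ∑ x ∈ A, ∑ a ∈ A, ‖a - x‖ ^ 2 := by
    rw [Finset.mul_sum, Finset.mul_sum]
    exact Finset.sum_le_sum key
  have pair := pair_sum_le A μ
  have hWpos : (0:ℝ) < W := hpos
  have hΦ : phi A {μ} = ∑ a ∈ A, ‖a - μ‖ ^ 2 := by
    simp [phi, phiPt_singleton]
  have hT : ∑ x ∈ A, phiPt x S * phi A (insert x S) ≤ 8 * W * phi A {μ} := by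
    have h1 : (A.card : ℝ) * ∑ x ∈ A, phiPt x S * phi A (insert x S)
        ≤ 4 * W * (2 * A.card * ∑ a ∈ A, ‖a - μ‖ ^ 2) := by
      refine sumkey.trans ?_
      have h4W : (0:ℝ) ≤ 4 * W := by linarith
      exact mul_le_mul_of_nonneg_left pair h4W
    rw [hΦ]
    have h2 : (A.card : ℝ) * ∑ x ∈ A, phiPt x S * phi A (insert x S)
        ≤ (A.card : ℝ) * (8 * W * ∑ a ∈ A, ‖a - μ‖ ^ 2) := by
      calc (A.card : ℝ) * ∑ x ∈ A, phiPt x S * phi A (insert x S)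
          ≤ 4 * W * (2 * A.card * ∑ a ∈ A, ‖a - μ‖ ^ 2) := h1
        _ = (A.card : ℝ) * (8 * W * ∑ a ∈ A, ‖a - μ‖ ^ 2) := by ring
    exact le_of_mul_le_mul_left h2 hn
  -- conclude by dividing by W
  have hsum : ∑ x ∈ A, (phiPt x S / W) * phi A (insert x S)
      = (∑ x ∈ A, phiPt x S * phi A (insert x S)) / W := by
    rw [Finset.sum_div]
    exact Finset.sum_congr rfl fun x _ => by rw [div_mul_eq_mul_div]
  rw [hsum, div_le_iff₀ hWpos]
  calc ∑ x ∈ A, phiPt x S * phi A (insert x S) ≤ 8 * W * phi A {μ} := hT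
    _ = 8 * phi A {μ} * W := by ring
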